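/- Let Γ be a random variable with values in [0,1] such that E[Γ^k (1−Γ)(1−2Γ)] ≥ 0 for all k ≥ 1. Then the support of Γ is contained in [0, 1/2] ∪ {1}. -/

import Mathlib

set_option maxHeartbeats 1000000


open MeasureTheory

/-- Let `Γ` be a random variable with values in `[0,1]` such that
`E[Γ^k (1-Γ)(1-2Γ)] ≥ 0` for all `k ≥ 1`.  Then the support of `Γ` is contained in
`[0, 1/2] ∪ {1}`, i.e. almost surely `Γ ≤ 1/2` or `Γ = 1`. -/
theorem support_in_half_union_one
    {Ω : Type*} [MeasureSpace Ω] [IsProbabilityMeasure (volume : Measure Ω)]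
    (Γ : Ω → ℝ) (hmeas : Measurable Γ)
    (hrange : ∀ᵐ ω, Γ ω ∈ Set.Icc (0:ℝ) 1)
    (hmom : ∀ k : ℕ, 1 ≤ k → 0 ≤ ∫ ω, Γ ω ^ k * (1 - Γ ω) * (1 - 2 * Γ ω)) :
    ∀ᵐ ω, Γ ω ≤ 1/2 ∨ Γ ω = 1 := by
  have hS : volume {ω | Γ ω ∈ Set.Ioo (1/2 : ℝ) 1} = 0 := by
    by_contra hS0
    set T : ℕ → Set Ω :=
      fun n => {ω | Γ ω ∈ Set.Icc (1/2 + 1/(n+4) : ℝ) (1 - 1/(n+4))} with hT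
    have hTmeas : ∀ n, MeasurableSet (T n) := fun n => hmeas measurableSet_Icc
    have hsub : {ω | Γ ω ∈ Set.Ioo (1/2 : ℝ) 1} ⊆ ⋃ n, T n := by
      intro ω hω
      obtain ⟨h1, h2⟩ := hω
      obtain ⟨n, hn⟩ := exists_nat_one_div_lt
        (lt_min (by linarith : (0:ℝ) < Γ ω - 1/2) (by linarith : (0:ℝ) < 1 - Γ ω))
      have h4 : (1:ℝ)/(n+4) ≤ 1/(n+1) := by
        apply one_div_le_one_div_of_le
        · positivity
        · linarith [Nat.cast_nonneg (α := ℝ) n]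
      refine Set.mem_iUnion.2 ⟨n, ?_, ?_⟩
      · have := lt_of_lt_of_le hn (min_le_left _ _)
        linarith
      · have := lt_of_lt_of_le hn (min_le_right _ _)
        linarith
    have hex : ∃ n, volume (T n) ≠ 0 := by
      by_contra h
      push_neg at h
      exact hS0 (measure_mono_null hsub (measure_iUnion_null h))
    obtain ⟨n, hn0⟩ := hex
    set a : ℝ := 1/2 + 1/(n+4) with ha
    set b : ℝ := 1 - 1/(n+4) with hb
    have hn4 : (0:ℝ) < 1/(n+4) := by positivity
    have hn4' : (1:ℝ)/(n+4) ≤ 1/4 := by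
      apply one_div_le_one_div_of_le
      · norm_num
      · linarith [Nat.cast_nonneg (α := ℝ) n]
    have ha12 : (1/2 : ℝ) < a := by rw [ha]; linarith
    have hab : a ≤ b := by rw [ha, hb]; linarith
    have hb1 : b < 1 := by rw [hb]; linarith
    have hmemT : ∀ ω ∈ T n, a ≤ Γ ω ∧ Γ ω ≤ b := by
      intro ω hω; rw [ha, hb]; exact hω
    clear_value a b
    have ha0 : (0:ℝ) < a := by linarith
    set c : ℝ := (1 - b) * (2 * a - 1) with hc
    have hc0 : 0 < c := by
      apply mul_pos <;> [linarith; linarith]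
    set p : ℝ := (volume (T n)).toReal with hp
    have hp0 : 0 < p := ENNReal.toReal_pos hn0 (measure_ne_top _ _)
    -- choose k
    have hr : (1/2 : ℝ)/a < 1 := by
      rw [div_lt_one ha0]; linarith
    have hr0 : (0:ℝ) ≤ (1/2)/a := by positivity
    have htend := tendsto_pow_atTop_nhds_zero_of_lt_one hr0 hr
    have hev : ∀ᶠ k in Filter.atTop, ((1/2 : ℝ)/a)^k < c * p :=
      htend.eventually_lt_const (mul_pos hc0 hp0)
    obtain ⟨k, hk, hk1⟩ := (hev.and (Filter.eventually_ge_atTop 1)).exists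
    -- the dominating function
    set g : Ω → ℝ := fun ω =>
      Set.indicator {ω | Γ ω ≤ 1/2} (fun _ => (1/2:ℝ)^k) ω
        + Set.indicator (T n) (fun _ => -(c * a^k)) ω with hg
    have hmeas2 : MeasurableSet {ω | Γ ω ≤ 1/2} := hmeas measurableSet_Iic
    have hgint : Integrable g := by
      apply Integrable.add
      · exact (integrable_const _).indicator hmeas2
      · exact (integrable_const _).indicator (hTmeas n)
    have hfmeas : Measurable (fun ω => Γ ω ^ k * (1 - Γ ω) * (1 - 2 * Γ ω)) := by
      fun_prop
    have hfint : Integrable (fun ω => Γ ω ^ k * (1 - Γ ω) * (1 - 2 * Γ ω)) := by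
      apply (integrable_const (1:ℝ)).mono' hfmeas.aestronglyMeasurable
      filter_upwards [hrange] with ω hω
      obtain ⟨h0, h1⟩ := hω
      have e1 : |Γ ω ^ k| ≤ 1 := by
        rw [abs_of_nonneg (pow_nonneg h0 k)]; exact pow_le_one₀ h0 h1
      have e2 : |1 - Γ ω| ≤ 1 := by rw [abs_le]; constructor <;> linarith
      have e3 : |1 - 2 * Γ ω| ≤ 1 := by rw [abs_le]; constructor <;> linarith
      have habs0 : (0:ℝ) ≤ |Γ ω ^ k| := abs_nonneg _
      have habs1 : (0:ℝ) ≤ |1 - Γ ω| := abs_nonneg _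
      calc ‖Γ ω ^ k * (1 - Γ ω) * (1 - 2 * Γ ω)‖
          = |Γ ω ^ k| * |1 - Γ ω| * |1 - 2 * Γ ω| := by
            rw [Real.norm_eq_abs, abs_mul, abs_mul]
        _ ≤ 1 * 1 * 1 := by
            apply mul_le_mul (mul_le_mul e1 e2 habs1 (by linarith)) e3 (abs_nonneg _)
            norm_num
        _ = 1 := by norm_num
    -- pointwise bound
    have hpt : ∀ᵐ ω, Γ ω ^ k * (1 - Γ ω) * (1 - 2 * Γ ω) ≤ g ω := by
      filter_upwards [hrange] with ω hω
      obtain ⟨h0, h1⟩ := hω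
      simp only [hg]
      by_cases hle : Γ ω ≤ 1/2
      · have hnotT : ω ∉ T n := by
          intro hmem
          have := (hmemT ω hmem).1
          linarith
        rw [Set.indicator_of_mem (by exact hle), Set.indicator_of_notMem hnotT, add_zero]
        have e1 : Γ ω ^ k ≤ (1/2:ℝ)^k := pow_le_pow_left₀ h0 hle k
        have e2 : (1 - Γ ω) * (1 - 2 * Γ ω) ≤ 1 := by nlinarith
        have e20 : (0:ℝ) ≤ (1 - Γ ω) * (1 - 2 * Γ ω) := by
          apply mul_nonneg <;> linarith
        calc Γ ω ^ k * (1 - Γ ω) * (1 - 2 * Γ ω)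
            = Γ ω ^ k * ((1 - Γ ω) * (1 - 2 * Γ ω)) := by ring
          _ ≤ (1/2:ℝ)^k * 1 := mul_le_mul e1 e2 e20 (by positivity)
          _ = (1/2:ℝ)^k := by ring
      · push_neg at hle
        rw [Set.indicator_of_notMem (by simpa using not_le.mpr hle), zero_add]
        by_cases hmem : ω ∈ T n
        · rw [Set.indicator_of_mem hmem]
          obtain ⟨hga, hgb⟩ := hmemT ω hmem
          have e1 : a ^ k ≤ Γ ω ^ k := pow_le_pow_left₀ (le_of_lt ha0) hga k
          have e2 : (1 - b) * (2 * Γ ω - 1) ≤ (1 - Γ ω) * (2 * Γ ω - 1) := by nlinarith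
          have e3 : (1 - b) * (2 * a - 1) ≤ (1 - b) * (2 * Γ ω - 1) := by nlinarith
          have key : a ^ k * ((1 - b) * (2 * a - 1)) ≤ Γ ω ^ k * ((1 - Γ ω) * (2 * Γ ω - 1)) := by
            apply mul_le_mul e1 (le_trans e3 e2) ?_ (pow_nonneg h0 k)
            nlinarith
          have heq : Γ ω ^ k * (1 - Γ ω) * (1 - 2 * Γ ω)
              = -(Γ ω ^ k * ((1 - Γ ω) * (2 * Γ ω - 1))) := by ring
          rw [heq, hc]
          linarith
        · rw [Set.indicator_of_notMem hmem]
          have h5 : 0 ≤ Γ ω ^ k * (1 - Γ ω) := mul_nonneg (pow_nonneg h0 k) (by linarith)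
          exact mul_nonpos_iff.mpr (Or.inl ⟨h5, by linarith⟩)
    -- integral comparison
    have hI : ∫ ω, Γ ω ^ k * (1 - Γ ω) * (1 - 2 * Γ ω)
        ≤ ((volume {ω | Γ ω ≤ 1/2}).toReal) * (1/2:ℝ)^k + p * (-(c * a^k)) := by
      have := integral_mono_ae hfint hgint hpt
      rwa [hg, integral_add ((integrable_const _).indicator hmeas2)
          ((integrable_const _).indicator (hTmeas n)),
        integral_indicator_const _ hmeas2, integral_indicator_const _ (hTmeas n),
        smul_eq_mul, smul_eq_mul, measureReal_def, measureReal_def, ← hp] at this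
    have hm1 : (volume {ω | Γ ω ≤ 1/2}).toReal ≤ 1 := by
      have := prob_le_one (μ := (volume : Measure Ω)) (s := {ω | Γ ω ≤ 1/2})
      exact ENNReal.toReal_le_of_le_ofReal one_pos.le (by simpa using this)
    have hak : (0:ℝ) < a ^ k := pow_pos ha0 k
    have hkey : (1/2:ℝ)^k < c * p * a ^ k := by
      have := (div_pow (1/2:ℝ) a k) ▸ hk
      rw [div_lt_iff₀ hak] at this
      linarith
    have hfinal : ∫ ω, Γ ω ^ k * (1 - Γ ω) * (1 - 2 * Γ ω) < 0 := by
      have h2 : ((volume {ω | Γ ω ≤ 1/2}).toReal) * (1/2:ℝ)^k ≤ (1/2:ℝ)^k := by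
        nlinarith [pow_nonneg (by norm_num : (0:ℝ) ≤ 1/2) k]
      have h3 : p * (-(c * a^k)) = -(c * p * a^k) := by ring
      rw [h3] at hI
      linarith
    exact absurd (hmom k hk1) (not_le.mpr hfinal)
  have hS' : ∀ᵐ ω, Γ ω ∉ Set.Ioo (1/2 : ℝ) 1 := by
    rw [ae_iff]; simpa using hS
  filter_upwards [hrange, hS'] with ω hω h2
  rcases le_or_gt (Γ ω) (1/2) with h | h
  · exact Or.inl h
  · right
    simp only [Set.mem_Ioo, not_and, not_lt] at h2
    exact le_antisymm hω.2 (h2 h)
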